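/- Let E, G be Banach function spaces, T : E → G dominated by a positive bounded operator R, and Y a Banach space with a boundedly-complete Schauder basis (b_n) with basis constant K and biorthogonal functionals (b_n*). Then for every e ∈ E(Y), the series ∑_{n=0}^∞ T⟨b_n*, e⟩(a) b_n converges in Y for a.e. a, defining an element T_Y e ∈ G(Y) with pointwise norm ‖(T_Y e)(a)‖_Y ≤ K · R(‖e(·)‖_Y)(a) a.e.; the resulting operator T_Y : E(Y) → G(Y) is linear, bounded, and satisfies ⟨b_n*, T_Y e⟩ = T⟨b_n*, e⟩ for all n and all e ∈ E(Y). -/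

import Mathlib

open MeasureTheory

/-- A (model of a) Banach function space on a measure space: a Banach lattice `E`
together with an injective lattice-respecting linear embedding `ι` into `L⁰(μ)`
whose range is an order ideal. -/
structure IsBanachFunctionSpace {α : Type*} [MeasurableSpace α] (μ : Measure α)
    (E : Type*) [NormedAddCommGroup E] [Lattice E] [IsOrderedAddMonoid E] [HasSolidNorm E] [NormedSpace ℝ E] [CompleteSpace E]
    (ι : E →ₗ[ℝ] (α →ₘ[μ] ℝ)) : Prop where
  inj : Function.Injective ι
  map_abs : ∀ e : E, ⇑(ι |e|) =ᵐ[μ] fun a => |(ι e) a|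
  ideal : ∀ (f : α →ₘ[μ] ℝ) (e : E), (∀ᵐ a ∂μ, |f a| ≤ |(ι e) a|) → ∃ e' : E, ι e' = f

/-- `f` is a member of the Köthe–Bochner space `E(Y)`, with `e ∈ E` representing its
pointwise norm function `a ↦ ‖f a‖`. -/
def MemKB {α E : Type*} [MeasurableSpace α] {μ : Measure α}
    [NormedAddCommGroup E] [Lattice E] [IsOrderedAddMonoid E] [HasSolidNorm E] [NormedSpace ℝ E]
    {Y : Type*} [NormedAddCommGroup Y]
    (ι : E →ₗ[ℝ] (α →ₘ[μ] ℝ)) (f : α → Y) (e : E) : Prop :=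
  AEStronglyMeasurable f μ ∧ (fun a => ‖f a‖) =ᵐ[μ] ⇑(ι e)

/-- `TY` is (a function-level realization of) a bounded linear operator
`E(Y) → G(Y)` which is a `Y`-valued extension of `T : E → G` with respect to the
pairing `⟨Y*, Y⟩`, i.e. `⟨y*, T_Y e⟩ = T ⟨y*, e⟩` for all `e ∈ E(Y)`, `y* ∈ Y*`. -/
def IsVectorExtension {α β E G : Type*} [MeasurableSpace α] [MeasurableSpace β]
    {μ : Measure α} {ν : Measure β}
    [NormedAddCommGroup E] [Lattice E] [IsOrderedAddMonoid E] [HasSolidNorm E] [NormedSpace ℝ E]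
    [NormedAddCommGroup G] [Lattice G] [IsOrderedAddMonoid G] [HasSolidNorm G] [NormedSpace ℝ G]
    (ιE : E →ₗ[ℝ] (α →ₘ[μ] ℝ)) (ιG : G →ₗ[ℝ] (β →ₘ[ν] ℝ))
    (T : E →L[ℝ] G) {Y : Type*} [NormedAddCommGroup Y] [NormedSpace ℝ Y]
    (TY : (α → Y) → (β → Y)) : Prop :=
  -- maps `E(Y)` into `G(Y)`
  (∀ (f : α → Y) (e : E), MemKB ιE f e → ∃ g : G, MemKB ιG (TY f) g) ∧
  -- well-defined on a.e.-equivalence classes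
  (∀ f g : α → Y, (∃ e : E, MemKB ιE f e) → f =ᵐ[μ] g → TY f =ᵐ[ν] TY g) ∧
  -- additive and homogeneous
  (∀ f g : α → Y, (∃ e : E, MemKB ιE f e) → (∃ e : E, MemKB ιE g e) →
    TY (f + g) =ᵐ[ν] TY f + TY g) ∧
  (∀ (c : ℝ) (f : α → Y), (∃ e : E, MemKB ιE f e) → TY (c • f) =ᵐ[ν] c • TY f) ∧
  -- bounded
  (∃ C : ℝ, ∀ (f : α → Y) (e : E) (g : G), MemKB ιE f e → MemKB ιG (TY f) g →
    ‖g‖ ≤ C * ‖e‖) ∧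
  -- the defining relation `⟨y*, T_Y e⟩ = T ⟨y*, e⟩`
  (∀ (f : α → Y) (y' : Y →L[ℝ] ℝ) (e exy : E), MemKB ιE f e →
    ((fun a => y' (f a)) =ᵐ[μ] ⇑(ιE exy)) →
    (fun b => y' (TY f b)) =ᵐ[ν] ⇑(ιG (T exy)))


section AuxLemmas

open Filter Topology MeasureTheory

private lemma coeFn_finset_sum {α : Type*} [MeasurableSpace α] {μ : Measure α}
    (s : Finset ℕ) (F : ℕ → α →ₘ[μ] ℝ) :
    ⇑(∑ n ∈ s, F n) =ᵐ[μ] fun a => ∑ n ∈ s, (F n) a := by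
  induction s using Finset.cons_induction with
  | empty => simp only [Finset.sum_empty]; exact AEEqFun.coeFn_zero
  | cons i s hi ih =>
    rw [Finset.sum_cons]
    filter_upwards [AEEqFun.coeFn_add (F i) (∑ n ∈ s, F n), ih] with a h1 h2
    simp only [Finset.sum_cons, h1, Pi.add_apply, h2]

private lemma coeFn_map_smul {α E : Type*} [MeasurableSpace α] {μ : Measure α}
    [NormedAddCommGroup E] [Lattice E] [IsOrderedAddMonoid E] [HasSolidNorm E] [NormedSpace ℝ E]
    (ι : E →ₗ[ℝ] (α →ₘ[μ] ℝ)) (r : ℝ) (e : E) :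
    ⇑(ι (r • e)) =ᵐ[μ] fun a => r * (ι e) a := by
  rw [_root_.map_smul]
  filter_upwards [AEEqFun.coeFn_smul r (ι e)] with a ha
  simpa using ha

namespace BFSaux

variable {α : Type*} [MeasurableSpace α] {μ : Measure α}
  {E : Type*} [NormedAddCommGroup E] [Lattice E] [IsOrderedAddMonoid E] [HasSolidNorm E] [NormedSpace ℝ E] [CompleteSpace E]
  {ι : E →ₗ[ℝ] (α →ₘ[μ] ℝ)}

lemma eq_of_ae (h : IsBanachFunctionSpace μ E ι) {e e' : E}
    (hee : ⇑(ι e) =ᵐ[μ] ⇑(ι e')) : e = e' :=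
  h.inj (AEEqFun.ext hee)

lemma nonneg_of_ae (h : IsBanachFunctionSpace μ E ι) {e : E}
    (he : ∀ᵐ a ∂μ, 0 ≤ (ι e) a) : 0 ≤ e := by
  have h1 : ⇑(ι |e|) =ᵐ[μ] ⇑(ι e) :=
    (h.map_abs e).trans (he.mono fun a ha => abs_of_nonneg ha)
  have h2 : |e| = e := eq_of_ae h h1
  exact h2 ▸ abs_nonneg e

lemma le_of_ae (h : IsBanachFunctionSpace μ E ι) {e e' : E}
    (hee : ∀ᵐ a ∂μ, (ι e) a ≤ (ι e') a) : e ≤ e' := by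
  have hz : ∀ᵐ a ∂μ, 0 ≤ (ι (e' - e)) a := by
    have h3 : ⇑(ι (e' - e)) =ᵐ[μ] ⇑(ι e') - ⇑(ι e) := by
      rw [map_sub]; exact AEEqFun.coeFn_sub _ _
    filter_upwards [h3, hee] with a ha3 ha
    rw [ha3]
    simpa using ha
  exact sub_nonneg.1 (nonneg_of_ae h hz)

lemma ae_le_of_le (h : IsBanachFunctionSpace μ E ι) {e e' : E} (hee : e ≤ e') :
    ∀ᵐ a ∂μ, (ι e) a ≤ (ι e') a := by
  have h1 : |e' - e| = e' - e := abs_of_nonneg (sub_nonneg.2 hee)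
  have h2 : ⇑(ι (e' - e)) =ᵐ[μ] fun a => |(ι (e' - e)) a| := by
    have := h.map_abs (e' - e)
    rwa [h1] at this
  have h3 : ⇑(ι (e' - e)) =ᵐ[μ] ⇑(ι e') - ⇑(ι e) := by
    rw [map_sub]; exact AEEqFun.coeFn_sub _ _
  filter_upwards [h2, h3] with a ha2 ha3
  have h4 : 0 ≤ (ι (e' - e)) a := by rw [ha2]; exact abs_nonneg _
  have h5 : (ι (e' - e)) a = (ι e') a - (ι e) a := by rw [ha3]; simp
  linarith

end BFSaux

private lemma aux_pairing {α G Y : Type*} [MeasurableSpace α] {μ : Measure α}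
    [NormedAddCommGroup G] [Lattice G] [IsOrderedAddMonoid G] [HasSolidNorm G] [NormedSpace ℝ G]
    [NormedAddCommGroup Y] [NormedSpace ℝ Y]
    (ιG : G →ₗ[ℝ] (α →ₘ[μ] ℝ)) (y' : Y →L[ℝ] ℝ) (b : ℕ → Y) (d : ℕ → G) (N : ℕ) :
    ∀ᵐ x ∂μ, (ιG (∑ n ∈ Finset.range N, y' (b n) • d n)) x
      = y' (∑ n ∈ Finset.range N, (ιG (d n)) x • b n) := by
  have hs : ⇑(ιG (∑ n ∈ Finset.range N, y' (b n) • d n)) =ᵐ[μ]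
      fun x => ∑ n ∈ Finset.range N, (ιG (y' (b n) • d n)) x := by
    rw [map_sum]; exact coeFn_finset_sum _ _
  have hsm : ∀ᵐ x ∂μ, ∀ n, (ιG (y' (b n) • d n)) x = y' (b n) * (ιG (d n)) x :=
    ae_all_iff.2 fun n => coeFn_map_smul ιG (y' (b n)) (d n)
  filter_upwards [hs, hsm] with x h1 h2
  rw [h1, map_sum]
  refine Finset.sum_congr rfl fun n _ => ?_
  rw [h2 n, _root_.map_smul, smul_eq_mul, mul_comm]

end AuxLemmas

open Filter Topology in
/-- **Extension via a boundedly-complete Schauder basis** (Lemma 3.4 in the paper).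
Let `T : E → G` be dominated by a positive bounded operator `R` and let `Y` have a
boundedly-complete Schauder basis `(bₙ)` with basis constant `K` and biorthogonal
functionals `(bₙ*)`. Then for every `f ∈ E(Y)` the series `∑ₙ T⟨bₙ*, f⟩(b) bₙ`
converges in `Y` for a.e. `b`, defining an element `T_Y f ∈ G(Y)` with
`‖(T_Y f)(b)‖ ≤ K ⬝ (R ‖f(·)‖)(b)` a.e.; the resulting map `T_Y : E(Y) → G(Y)` is
linear, bounded, and satisfies `⟨bₙ*, T_Y f⟩ = T⟨bₙ*, f⟩` for all `n`. -/
theorem extension_via_boundedly_complete_basis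
    {α β E G : Type*} [MeasurableSpace α] [MeasurableSpace β]
    {μ : Measure α} {ν : Measure β}
    [NormedAddCommGroup E] [Lattice E] [IsOrderedAddMonoid E] [HasSolidNorm E] [NormedSpace ℝ E] [CompleteSpace E]
    [NormedAddCommGroup G] [Lattice G] [IsOrderedAddMonoid G] [HasSolidNorm G] [NormedSpace ℝ G] [CompleteSpace G]
    (ιE : E →ₗ[ℝ] (α →ₘ[μ] ℝ)) (ιG : G →ₗ[ℝ] (β →ₘ[ν] ℝ))
    (hE : IsBanachFunctionSpace μ E ιE) (hG : IsBanachFunctionSpace ν G ιG)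
    (T : E →ₗ[ℝ] G) (R : E →L[ℝ] G)
    (hRpos : ∀ e : E, 0 ≤ e → 0 ≤ R e)
    (hdom : ∀ e : E, |T e| ≤ R |e|)
    {Y : Type*} [NormedAddCommGroup Y] [NormedSpace ℝ Y] [CompleteSpace Y]
    (b : ℕ → Y) (bstar : ℕ → Y →L[ℝ] ℝ) (K : ℝ)
    -- `(bₙ*)` is biorthogonal to `(bₙ)`
    (hbiorth : ∀ n m : ℕ, bstar n (b m) = if n = m then 1 else 0)
    -- `(bₙ)` is a Schauder basis
    (hbasis : ∀ y : Y, Tendsto (fun N => ∑ n ∈ Finset.range N, bstar n y • b n)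
      atTop (𝓝 y))
    -- with basis constant `K`
    (hK : ∀ (y : Y) (N : ℕ), ‖∑ n ∈ Finset.range N, bstar n y • b n‖ ≤ K * ‖y‖)
    -- and boundedly complete
    (hbc : ∀ a : ℕ → ℝ, (∃ C : ℝ, ∀ N, ‖∑ n ∈ Finset.range N, a n • b n‖ ≤ C) →
      ∃ y : Y, Tendsto (fun N => ∑ n ∈ Finset.range N, a n • b n) atTop (𝓝 y)) :
    -- every `f ∈ E(Y)` has coefficient functions `⟨bₙ*, f⟩` in `E`, and …
    (∀ (f : α → Y) (e0 : E), MemKB ιE f e0 →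
      ∃ c : ℕ → E, ∀ n, (fun a => bstar n (f a)) =ᵐ[μ] ⇑(ιE (c n))) ∧
    ∃ TY : (α → Y) → (β → Y),
      (∀ (f : α → Y) (e0 : E) (c : ℕ → E), MemKB ιE f e0 →
        (∀ n, (fun a => bstar n (f a)) =ᵐ[μ] ⇑(ιE (c n))) →
        -- the series `∑ₙ T⟨bₙ*, f⟩(b) bₙ` converges a.e. to `(T_Y f)(b)`
        (∀ᵐ x ∂ν, Tendsto
            (fun N => ∑ n ∈ Finset.range N, (ιG (T (c n))) x • b n)
            atTop (𝓝 (TY f x))) ∧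
        -- pointwise norm bound
        (∀ᵐ x ∂ν, ‖TY f x‖ ≤ K * (ιG (R e0)) x) ∧
        -- `T_Y f ∈ G(Y)`, with norm bound (boundedness of `T_Y`)
        (∃ g0 : G, MemKB ιG (TY f) g0 ∧ ‖g0‖ ≤ K * ‖R‖ * ‖e0‖) ∧
        -- the relation `⟨bₙ*, T_Y f⟩ = T⟨bₙ*, f⟩`
        (∀ n, (fun x => bstar n (TY f x)) =ᵐ[ν] ⇑(ιG (T (c n))))) ∧
      -- `T_Y` is linear
      (∀ f g : α → Y, (∃ e : E, MemKB ιE f e) → (∃ e : E, MemKB ιE g e) →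
        TY (f + g) =ᵐ[ν] TY f + TY g) ∧
      (∀ (r : ℝ) (f : α → Y), (∃ e : E, MemKB ιE f e) →
        TY (r • f) =ᵐ[ν] r • TY f) := by
    classical
  haveI : Nonempty Y := ⟨0⟩
  -- coefficient functions exist
  have hcoef : ∀ f : α → Y, (∃ e0 : E, MemKB ιE f e0) →
      ∃ c : ℕ → E, ∀ n, (fun a => bstar n (f a)) =ᵐ[μ] ⇑(ιE (c n)) := by
    rintro f ⟨e0, hfm, he0⟩
    have hmeas : ∀ n : ℕ, AEStronglyMeasurable (fun a => bstar n (f a)) μ :=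
      fun n => (bstar n).continuous.comp_aestronglyMeasurable hfm
    have hdomn : ∀ n, ∀ᵐ a ∂μ,
        |(AEEqFun.mk _ (hmeas n)) a| ≤ |(ιE (‖bstar n‖ • e0)) a| := by
      intro n
      filter_upwards [AEEqFun.coeFn_mk _ (hmeas n), he0,
        coeFn_map_smul ιE (‖bstar n‖) e0] with a h1 h2 h3
      rw [h1, h3]
      calc |bstar n (f a)| ≤ ‖bstar n‖ * ‖f a‖ := by
            rw [← Real.norm_eq_abs]; exact (bstar n).le_opNorm _
        _ = ‖bstar n‖ * (ιE e0) a := by rw [h2]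
        _ ≤ |‖bstar n‖ * (ιE e0) a| := le_abs_self _
    refine ⟨fun n => (hE.ideal _ _ (hdomn n)).choose, fun n => ?_⟩
    rw [(hE.ideal _ _ (hdomn n)).choose_spec]
    exact (AEEqFun.coeFn_mk _ (hmeas n)).symm
  have hc_unique : ∀ (f : α → Y) (c c' : ℕ → E),
      (∀ n, (fun a => bstar n (f a)) =ᵐ[μ] ⇑(ιE (c n))) →
      (∀ n, (fun a => bstar n (f a)) =ᵐ[μ] ⇑(ιE (c' n))) → c = c' :=
    fun f c c' h1 h2 => funext fun n => BFSaux.eq_of_ae hE ((h1 n).symm.trans (h2 n))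
  -- either K is nonneg, or Y is trivial
  have hsplit : 0 ≤ K ∨ ∀ y : Y, y = 0 := by
    by_cases hY : ∀ y : Y, y = 0
    · exact Or.inr hY
    · push_neg at hY
      obtain ⟨y, hy⟩ := hY
      left
      have h1 : Tendsto (fun N => ‖∑ n ∈ Finset.range N, bstar n y • b n‖) atTop (𝓝 ‖y‖) :=
        (hbasis y).norm
      have h2 : ‖y‖ ≤ K * ‖y‖ := le_of_tendsto h1 (Eventually.of_forall fun N => hK y N)
      nlinarith [norm_pos_iff.2 hy]
  -- a countable norming family on the span of the basis
  obtain ⟨ys, hys1, hnorm⟩ : ∃ ys : ℕ → (Y →L[ℝ] ℝ), (∀ k, ‖ys k‖ ≤ 1) ∧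
      ∀ z ∈ Submodule.span ℝ (Set.range b), ∀ C : ℝ, (∀ k, ys k z ≤ C) → ‖z‖ ≤ C := by
    obtain ⟨D, hDc, hDsub⟩ := (Set.countable_range b).isSeparable.span (R := ℝ)
    obtain ⟨u, hu⟩ := (hDc.insert 0).exists_eq_range ⟨0, Set.mem_insert _ _⟩
    choose ys hys1 hys2 using fun k => exists_dual_vector'' ℝ (u k)
    refine ⟨ys, hys1, fun z hz C hC => ?_⟩
    refine le_of_forall_pos_le_add fun ε hε => ?_
    have hzD : z ∈ closure (Set.range u) := by
      rw [← hu]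
      exact closure_mono (Set.subset_insert 0 D) (hDsub hz)
    obtain ⟨d, hdmem, hd⟩ := Metric.mem_closure_iff.1 hzD (ε/2) (by positivity)
    obtain ⟨k, rfl⟩ := hdmem
    have e1 : ‖z‖ ≤ ‖z - u k‖ + ‖u k‖ := by
      calc ‖z‖ = ‖(z - u k) + u k‖ := by rw [sub_add_cancel]
        _ ≤ _ := norm_add_le _ _
    have h4 : |ys k (u k - z)| ≤ ‖u k - z‖ := by
      calc |ys k (u k - z)| = ‖ys k (u k - z)‖ := (Real.norm_eq_abs _).symm
        _ ≤ ‖ys k‖ * ‖u k - z‖ := (ys k).le_opNorm _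
        _ ≤ 1 * ‖u k - z‖ := mul_le_mul_of_nonneg_right (hys1 k) (norm_nonneg _)
        _ = ‖u k - z‖ := one_mul _
    have h5 : ‖u k - z‖ < ε/2 := by
      rw [norm_sub_rev, ← dist_eq_norm]; exact hd
    have h3 : ys k (u k) - ys k z = ys k (u k - z) := by rw [map_sub]
    have e2 : ‖u k‖ ≤ C + ε/2 := by
      have hys2' : ys k (u k) = ‖u k‖ := by simpa using hys2 k
      have := hC k
      have := le_abs_self (ys k (u k - z))
      linarith
    have h6 : ‖z - u k‖ < ε/2 := by rw [← dist_eq_norm]; exact hd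
    linarith
  -- define T_Y
  set TY : (α → Y) → β → Y := fun f x =>
    if h : ∃ e0 : E, MemKB ιE f e0 then
      limUnder atTop (fun N => ∑ n ∈ Finset.range N, (ιG (T ((hcoef f h).choose n))) x • b n)
    else 0 with hTYdef
  -- the master lemma: a.e. convergence and the pointwise bound
  have master : ∀ (f : α → Y) (e0 : E) (c : ℕ → E), MemKB ιE f e0 →
      (∀ n, (fun a => bstar n (f a)) =ᵐ[μ] ⇑(ιE (c n))) →
      (∀ᵐ x ∂ν, Tendsto (fun N => ∑ n ∈ Finset.range N, (ιG (T (c n))) x • b n)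
        atTop (𝓝 (TY f x)))
      ∧ (∀ᵐ x ∂ν, ‖TY f x‖ ≤ K * (ιG (R e0)) x) := by
    intro f e0 c hf hc
    obtain ⟨hfm, he0⟩ := hf
    have key : ∀ (k N : ℕ), ∀ᵐ x ∂ν,
        ys k (∑ n ∈ Finset.range N, (ιG (T (c n))) x • b n) ≤ K * (ιG (R e0)) x := by
      intro k N
      have h2 : |∑ n ∈ Finset.range N, ys k (b n) • c n| ≤ K • e0 := by
        refine BFSaux.le_of_ae hE ?_
        have hcc : ∀ᵐ a ∂μ, ∀ n, bstar n (f a) = (ιE (c n)) a := ae_all_iff.2 hc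
        filter_upwards [hE.map_abs (∑ n ∈ Finset.range N, ys k (b n) • c n),
          aux_pairing ιE (ys k) b c N, hcc, he0, coeFn_map_smul ιE K e0]
          with a ha1 ha2 ha3 ha4 ha5
        rw [ha1, ha5, ha2]
        have hz : (∑ n ∈ Finset.range N, (ιE (c n)) a • b n)
            = ∑ n ∈ Finset.range N, bstar n (f a) • b n :=
          Finset.sum_congr rfl fun n _ => by rw [ha3 n]
        rw [hz]
        calc |ys k (∑ n ∈ Finset.range N, bstar n (f a) • b n)|
            = ‖ys k (∑ n ∈ Finset.range N, bstar n (f a) • b n)‖ := (Real.norm_eq_abs _).symm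
          _ ≤ ‖ys k‖ * ‖∑ n ∈ Finset.range N, bstar n (f a) • b n‖ := (ys k).le_opNorm _
          _ ≤ 1 * ‖∑ n ∈ Finset.range N, bstar n (f a) • b n‖ :=
              mul_le_mul_of_nonneg_right (hys1 k) (norm_nonneg _)
          _ = ‖∑ n ∈ Finset.range N, bstar n (f a) • b n‖ := one_mul _
          _ ≤ K * ‖f a‖ := hK (f a) N
          _ = K * (ιE e0) a := by rw [ha4]
      have h3 : T (∑ n ∈ Finset.range N, ys k (b n) • c n) ≤ R (K • e0) := by
        refine le_trans (le_abs_self _) (le_trans (hdom _) ?_)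
        have h4 := hRpos _ (sub_nonneg.2 h2)
        rw [map_sub] at h4
        exact sub_nonneg.1 h4
      have h6 := BFSaux.ae_le_of_le hG h3
      have h8 : T (∑ n ∈ Finset.range N, ys k (b n) • c n)
          = ∑ n ∈ Finset.range N, ys k (b n) • T (c n) := by
        rw [map_sum]
        exact Finset.sum_congr rfl fun n _ => _root_.map_smul T _ _
      have h9 : ∀ᵐ x ∂ν, (ιG (R (K • e0))) x = K * (ιG (R e0)) x := by
        rw [show R (K • e0) = K • R e0 from _root_.map_smul R K e0]
        exact coeFn_map_smul ιG K (R e0)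
      filter_upwards [h6, aux_pairing ιG (ys k) b (fun n => T (c n)) N, h9]
        with x hx6 hx7 hx9
      calc ys k (∑ n ∈ Finset.range N, (ιG (T (c n))) x • b n)
          = (ιG (T (∑ n ∈ Finset.range N, ys k (b n) • c n))) x := by rw [h8]; exact hx7.symm
        _ ≤ (ιG (R (K • e0))) x := hx6
        _ = K * (ιG (R e0)) x := hx9
    have hbound : ∀ᵐ x ∂ν, ∀ N,
        ‖∑ n ∈ Finset.range N, (ιG (T (c n))) x • b n‖ ≤ K * (ιG (R e0)) x := by
      have hae : ∀ᵐ x ∂ν, ∀ k N,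
          ys k (∑ n ∈ Finset.range N, (ιG (T (c n))) x • b n) ≤ K * (ιG (R e0)) x :=
        ae_all_iff.2 fun k => ae_all_iff.2 fun N => key k N
      filter_upwards [hae] with x hx N
      refine hnorm _ ?_ _ (fun k => hx k N)
      exact Submodule.sum_mem _ fun n _ => Submodule.smul_mem _ _ (Submodule.subset_span ⟨n, rfl⟩)
    have hex : ∃ e' : E, MemKB ιE f e' := ⟨e0, hfm, he0⟩
    have hcceq : (hcoef f hex).choose = c := hc_unique f _ c (hcoef f hex).choose_spec hc
    have hconv : ∀ᵐ x ∂ν, Tendsto (fun N => ∑ n ∈ Finset.range N, (ιG (T (c n))) x • b n)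
        atTop (𝓝 (TY f x)) := by
      filter_upwards [hbound] with x hx
      obtain ⟨y, hy⟩ := hbc (fun n => (ιG (T (c n))) x) ⟨K * (ιG (R e0)) x, hx⟩
      have hTYx : TY f x = y := by
        simp only [hTYdef]
        rw [dif_pos hex, hcceq]
        exact hy.limUnder_eq
      rw [hTYx]; exact hy
    refine ⟨hconv, ?_⟩
    filter_upwards [hconv, hbound] with x hx1 hx2
    exact le_of_tendsto hx1.norm (Eventually.of_forall hx2)
  refine ⟨fun f e0 hf => hcoef f ⟨e0, hf⟩, TY, ?_, ?_, ?_⟩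
  · -- main bullet
    intro f e0 c hf hc
    obtain ⟨hconv, hbnd⟩ := master f e0 c hf hc
    refine ⟨hconv, hbnd, ?_, ?_⟩
    · -- T_Y f ∈ G(Y) with norm bound
      have hSmeas : ∀ N : ℕ, AEStronglyMeasurable
          (fun x => ∑ n ∈ Finset.range N, (ιG (T (c n))) x • b n) ν :=
        fun N => Finset.aestronglyMeasurable_fun_sum _
          fun n _ => ((ιG (T (c n))).aestronglyMeasurable.smul_const (b n))
      have hTYmeas : AEStronglyMeasurable (TY f) ν :=
        aestronglyMeasurable_of_tendsto_ae atTop hSmeas hconv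
      have hnmeas : AEStronglyMeasurable (fun x => ‖TY f x‖) ν := hTYmeas.norm
      rcases hsplit with hK0 | htriv
      · have hub : ∀ᵐ x ∂ν, |(AEEqFun.mk _ hnmeas) x| ≤ |(ιG (K • R e0)) x| := by
          filter_upwards [AEEqFun.coeFn_mk _ hnmeas, hbnd, coeFn_map_smul ιG K (R e0)]
            with x h1 h2 h3
          rw [h1, h3]
          calc |‖TY f x‖| = ‖TY f x‖ := abs_norm _
            _ ≤ K * (ιG (R e0)) x := h2
            _ ≤ |K * (ιG (R e0)) x| := le_abs_self _
        obtain ⟨g0, hg0⟩ := hG.ideal _ (K • R e0) hub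
        have hg0' : ⇑(ιG g0) =ᵐ[ν] fun x => ‖TY f x‖ := by
          rw [hg0]; exact AEEqFun.coeFn_mk _ hnmeas
        refine ⟨g0, ⟨hTYmeas, hg0'.symm⟩, ?_⟩
        have habs : |g0| ≤ |K • R e0| := by
          refine BFSaux.le_of_ae hG ?_
          filter_upwards [hG.map_abs g0, hG.map_abs (K • R e0), hg0', hbnd,
            coeFn_map_smul ιG K (R e0)] with x h1 h2 h3 h4 h5
          rw [h1, h2, h3, h5]
          calc |‖TY f x‖| = ‖TY f x‖ := abs_norm _
            _ ≤ K * (ιG (R e0)) x := h4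
            _ ≤ |K * (ιG (R e0)) x| := le_abs_self _
        calc ‖g0‖ ≤ ‖K • R e0‖ := norm_le_norm_of_abs_le_abs habs
          _ = K * ‖R e0‖ := by rw [norm_smul, Real.norm_eq_abs, abs_of_nonneg hK0]
          _ ≤ K * (‖R‖ * ‖e0‖) := mul_le_mul_of_nonneg_left (R.le_opNorm e0) hK0
          _ = K * ‖R‖ * ‖e0‖ := (mul_assoc _ _ _).symm
      · have he00 : e0 = 0 := by
          refine BFSaux.eq_of_ae hE ?_
          have hz : ⇑(ιE (0:E)) =ᵐ[μ] (fun _ => (0:ℝ)) := by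
            rw [map_zero]; exact AEEqFun.coeFn_zero
          refine EventuallyEq.trans ?_ hz.symm
          filter_upwards [hf.2] with a ha
          rw [← ha, htriv (f a), norm_zero]
        refine ⟨0, ⟨hTYmeas, ?_⟩, ?_⟩
        · have hz : ⇑(ιG (0:G)) =ᵐ[ν] (fun _ => (0:ℝ)) := by
            rw [map_zero]; exact AEEqFun.coeFn_zero
          refine EventuallyEq.trans (Eventually.of_forall fun x => ?_) hz.symm
          show ‖TY f x‖ = (fun _ => (0:ℝ)) x
          rw [htriv (TY f x), norm_zero]
        · rw [he00]; simp
    · -- the relation ⟨bₙ*, T_Y f⟩ = T⟨bₙ*, f⟩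
      intro n
      filter_upwards [hconv] with x hx
      have h1 : Tendsto (fun N => bstar n (∑ m ∈ Finset.range N, (ιG (T (c m))) x • b m))
          atTop (𝓝 (bstar n (TY f x))) := ((bstar n).continuous.tendsto _).comp hx
      have h2 : ∀ N, n + 1 ≤ N →
          bstar n (∑ m ∈ Finset.range N, (ιG (T (c m))) x • b m) = (ιG (T (c n))) x := by
        intro N hN
        rw [map_sum]
        have hterm : ∀ m ∈ Finset.range N,
            bstar n ((ιG (T (c m))) x • b m) = if n = m then (ιG (T (c m))) x else 0 := by
          intro m _
          rw [_root_.map_smul, smul_eq_mul, hbiorth n m]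
          split <;> simp
        rw [Finset.sum_congr rfl hterm, Finset.sum_ite_eq]
        simp [Finset.mem_range.2 hN]
      have h3 : Tendsto (fun N => bstar n (∑ m ∈ Finset.range N, (ιG (T (c m))) x • b m))
          atTop (𝓝 ((ιG (T (c n))) x)) := by
        refine Tendsto.congr' ?_ tendsto_const_nhds
        filter_upwards [eventually_ge_atTop (n+1)] with N hN
        exact (h2 N hN).symm
      exact tendsto_nhds_unique h1 h3
  · -- additivity
    rintro f g ⟨ef, hfmem⟩ ⟨eg, hgmem⟩
    obtain ⟨cf, hcf⟩ := hcoef f ⟨ef, hfmem⟩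
    obtain ⟨cg, hcg⟩ := hcoef g ⟨eg, hgmem⟩
    have haddmeas : AEStronglyMeasurable (f + g) μ := hfmem.1.add hgmem.1
    have hnm : AEStronglyMeasurable (fun a => ‖(f + g) a‖) μ := haddmeas.norm
    have hub : ∀ᵐ a ∂μ, |(AEEqFun.mk _ hnm) a| ≤ |(ιE (ef + eg)) a| := by
      have hia : ⇑(ιE (ef + eg)) =ᵐ[μ] fun a => (ιE ef) a + (ιE eg) a := by
        rw [map_add]
        filter_upwards [AEEqFun.coeFn_add (ιE ef) (ιE eg)] with a ha
        simpa using ha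
      filter_upwards [AEEqFun.coeFn_mk _ hnm, hfmem.2, hgmem.2, hia] with a h1 h2 h3 h4
      rw [h1, h4]
      calc |‖(f + g) a‖| = ‖f a + g a‖ := by rw [abs_norm]; rfl
        _ ≤ ‖f a‖ + ‖g a‖ := norm_add_le _ _
        _ = (ιE ef) a + (ιE eg) a := by rw [h2, h3]
        _ ≤ |(ιE ef) a + (ιE eg) a| := le_abs_self _
    obtain ⟨efg, hefg⟩ := hE.ideal _ (ef + eg) hub
    have hmem : MemKB ιE (f + g) efg :=
      ⟨haddmeas, by rw [hefg]; exact (AEEqFun.coeFn_mk _ hnm).symm⟩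
    have hcadd : ∀ n, (fun a => bstar n ((f + g) a)) =ᵐ[μ] ⇑(ιE (cf n + cg n)) := by
      intro n
      have hia : ⇑(ιE (cf n + cg n)) =ᵐ[μ] fun a => (ιE (cf n)) a + (ιE (cg n)) a := by
        rw [map_add]
        filter_upwards [AEEqFun.coeFn_add (ιE (cf n)) (ιE (cg n))] with a ha
        simpa using ha
      filter_upwards [hcf n, hcg n, hia] with a h1 h2 h3
      simp only [Pi.add_apply]
      rw [map_add, h1, h2, h3]
    have h1 := (master f ef cf hfmem hcf).1
    have h2 := (master g eg cg hgmem hcg).1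
    have h3 := (master (f + g) efg (fun n => cf n + cg n) hmem hcadd).1
    have hS : ∀ᵐ x ∂ν, ∀ n,
        (ιG (T (cf n + cg n))) x = (ιG (T (cf n))) x + (ιG (T (cg n))) x := by
      rw [ae_all_iff]; intro n
      rw [show ιG (T (cf n + cg n)) = ιG (T (cf n)) + ιG (T (cg n)) by
        rw [map_add T, map_add ιG]]
      filter_upwards [AEEqFun.coeFn_add (ιG (T (cf n))) (ιG (T (cg n)))] with x hx
      simpa using hx
    filter_upwards [h1, h2, h3, hS] with x hx1 hx2 hx3 hxS
    have hsum : Tendsto (fun N => ∑ n ∈ Finset.range N, (ιG (T (cf n + cg n))) x • b n)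
        atTop (𝓝 (TY f x + TY g x)) := by
      refine Tendsto.congr (fun N => ?_) (hx1.add hx2)
      rw [← Finset.sum_add_distrib]
      exact Finset.sum_congr rfl fun n _ => by rw [hxS n, add_smul]
    simpa using tendsto_nhds_unique hx3 hsum
  · -- homogeneity
    rintro r f ⟨ef, hfmem⟩
    obtain ⟨cf, hcf⟩ := hcoef f ⟨ef, hfmem⟩
    have hmem : MemKB ιE (r • f) (|r| • ef) := by
      refine ⟨hfmem.1.const_smul r, ?_⟩
      filter_upwards [hfmem.2, coeFn_map_smul ιE |r| ef] with a h1 h2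
      simp only [Pi.smul_apply]
      rw [norm_smul, Real.norm_eq_abs, h1, h2]
    have hcs : ∀ n, (fun a => bstar n ((r • f) a)) =ᵐ[μ] ⇑(ιE (r • cf n)) := by
      intro n
      filter_upwards [hcf n, coeFn_map_smul ιE r (cf n)] with a h1 h2
      simp only [Pi.smul_apply]
      rw [_root_.map_smul, smul_eq_mul, h1, h2]
    have h1 := (master f ef cf hfmem hcf).1
    have h2 := (master (r • f) (|r| • ef) (fun n => r • cf n) hmem hcs).1
    have hS : ∀ᵐ x ∂ν, ∀ n, (ιG (T (r • cf n))) x = r * (ιG (T (cf n))) x := by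
      rw [ae_all_iff]; intro n
      rw [show T (r • cf n) = r • T (cf n) from _root_.map_smul T r (cf n)]
      exact coeFn_map_smul ιG r (T (cf n))
    filter_upwards [h1, h2, hS] with x hx1 hx2 hxS
    have hsm : Tendsto (fun N => ∑ n ∈ Finset.range N, (ιG (T (r • cf n))) x • b n)
        atTop (𝓝 (r • TY f x)) := by
      refine Tendsto.congr (fun N => ?_) (hx1.const_smul r)
      rw [Finset.smul_sum]
      exact Finset.sum_congr rfl fun n _ => by rw [hxS n, smul_smul]
    simpa using tendsto_nhds_unique hx2 hsm
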